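/- Let X be a compact Hausdorff space, V a finite-dimensional real vector space, μ a finite Borel measure on X with full support, φ: X → V continuous, and g: V → ℝ linear with g(φ(x)) = 1 for all x ∈ X. Let C = Cone(φ(X)) and let (F_j) be an increasing sequence of vector subspaces of C(X,ℝ) whose union is a subalgebra that separates points and contains the constants. For λ ∈ V*, say λ ∈ C*(F_j) if ∫_X λ(φ(u)) p(u)² dμ(u) ≥ 0 for all p ∈ F_j. Then the intersection over all j of C*(F_j) equals the dual cone C* = {λ ∈ V* : λ(c) ≥ 0 for all c ∈ C}. -/

import Mathlib

open MeasureTheory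

/-- The conical hull of a set: all finite nonnegative combinations of its elements. -/
def coneHull {V : Type*} [AddCommMonoid V] [Module ℝ V] (S : Set V) : Set V :=
  {v | ∃ (m : ℕ) (c : Fin m → ℝ) (x : Fin m → V),
    (∀ i, 0 ≤ c i) ∧ (∀ i, x i ∈ S) ∧ v = ∑ i, c i • x i}

theorem stmt_0
    {X : Type*} [TopologicalSpace X] [CompactSpace X] [T2Space X]
    [MeasurableSpace X] [BorelSpace X]
    {V : Type*} [NormedAddCommGroup V] [NormedSpace ℝ V] [FiniteDimensional ℝ V]
    (μ : Measure X) [IsFiniteMeasure μ]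
    (hfull : ∀ U : Set X, IsOpen U → U.Nonempty → 0 < μ U)
    (φ : C(X, V)) (g : V →ₗ[ℝ] ℝ) (hg : ∀ x : X, g (φ x) = 1)
    (F : ℕ → Subspace ℝ C(X, ℝ)) (hmono : Monotone F)
    (hmul : ∀ f₁ f₂ : C(X, ℝ), f₁ ∈ (⋃ j, (F j : Set C(X, ℝ))) →
      f₂ ∈ (⋃ j, (F j : Set C(X, ℝ))) → f₁ * f₂ ∈ ⋃ j, (F j : Set C(X, ℝ)))
    (hsep : ∀ x y : X, x ≠ y → ∃ f ∈ ⋃ j, (F j : Set C(X, ℝ)), f x ≠ f y)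
    (hconst : (1 : C(X, ℝ)) ∈ ⋃ j, (F j : Set C(X, ℝ))) :
    {l : V →ₗ[ℝ] ℝ | ∀ j : ℕ, ∀ p ∈ F j, 0 ≤ ∫ u, l (φ u) * (p u) ^ 2 ∂μ} =
    {l : V →ₗ[ℝ] ℝ | ∀ c ∈ coneHull (Set.range fun x : X => φ x), 0 ≤ l c} := by
  have hrange : ∀ x : X, (φ x) ∈ coneHull (Set.range fun x : X => φ x) := by
    intro x
    exact ⟨1, fun _ => 1, fun _ => φ x, fun _ => zero_le_one, fun _ => ⟨x, rfl⟩, by simp⟩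
  -- the subalgebra
  obtain ⟨j₁, hj₁⟩ := Set.mem_iUnion.mp hconst
  have hUmem : ∀ {f : C(X, ℝ)}, f ∈ (⋃ j, (F j : Set C(X, ℝ))) ↔ ∃ j, f ∈ F j := by
    intro f; exact Set.mem_iUnion
  let A : Subalgebra ℝ C(X, ℝ) :=
    { carrier := ⋃ j, (F j : Set C(X, ℝ))
      mul_mem' := fun hf hg => hmul _ _ hf hg
      one_mem' := hconst
      add_mem' := by
        rintro a b ha hb
        obtain ⟨i, hi⟩ := hUmem.mp ha
        obtain ⟨j, hj⟩ := hUmem.mp hb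
        exact hUmem.mpr ⟨max i j, Submodule.add_mem _
          (hmono (le_max_left i j) hi) (hmono (le_max_right i j) hj)⟩
      zero_mem' := hUmem.mpr ⟨0, Submodule.zero_mem _⟩
      algebraMap_mem' := by
        intro r
        have : algebraMap ℝ C(X, ℝ) r = r • (1 : C(X, ℝ)) :=
          Algebra.algebraMap_eq_smul_one r
        rw [this]
        exact hUmem.mpr ⟨j₁, Submodule.smul_mem _ _ hj₁⟩ }
  have hAsep : A.SeparatesPoints := by
    intro x y hxy
    obtain ⟨f, hf, hfxy⟩ := hsep x y hxy
    exact ⟨(f : X → ℝ), ⟨f, hf, rfl⟩, hfxy⟩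
  have hSW : A.topologicalClosure = ⊤ :=
    ContinuousMap.subalgebra_topologicalClosure_eq_top_of_separatesPoints A hAsep
  have hdense : closure (A : Set C(X, ℝ)) = Set.univ := by
    have := congrArg (fun B : Subalgebra ℝ C(X, ℝ) => (B : Set C(X, ℝ))) hSW
    simpa [Subalgebra.topologicalClosure_coe] using this
  ext l
  simp only [Set.mem_setOf_eq]
  constructor
  · intro hl
    -- key pointwise claim
    have hpt : ∀ x : X, 0 ≤ l (φ x) := by
      intro x₀
      by_contra hneg
      push_neg at hneg
      set a : ℝ := -l (φ x₀) with ha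
      have ha0 : 0 < a := by simp [ha]; linarith
      have hlc : Continuous fun u : X => l (φ u) :=
        (LinearMap.continuous_of_finiteDimensional l).comp φ.continuous
      set fC : C(X, ℝ) := ⟨fun u => l (φ u), hlc⟩ with hfC
      set U : Set X := {u | l (φ u) < -a / 2} with hU
      have hUopen : IsOpen U := isOpen_lt hlc continuous_const
      have hx₀U : x₀ ∈ U := by simp [hU, ha]; linarith
      -- Urysohn
      obtain ⟨h, h0, h1, h01⟩ := exists_continuous_zero_one_of_isClosed
        (isClosed_compl_iff.mpr hUopen) (isClosed_singleton (x := x₀))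
        (by simp [Set.disjoint_singleton_right, hx₀U])
      have hx₀h : h x₀ = 1 := h1 rfl
      set W : Set X := U ∩ {u | 1 / 2 < h u} with hW
      have hWopen : IsOpen W := hUopen.inter (isOpen_lt continuous_const h.continuous)
      have hx₀W : x₀ ∈ W := ⟨hx₀U, by simp [hx₀h]; norm_num⟩
      -- the integral of fC * h^2 is negative
      have hμW : 0 < (μ W).toReal :=
        ENNReal.toReal_pos (hfull W hWopen ⟨x₀, hx₀W⟩).ne' (measure_ne_top μ W)
      have hcont_fh : Continuous fun u => fC u * (h u) ^ 2 := by
        fun_prop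
      have hint_fh : Integrable (fun u => fC u * (h u) ^ 2) μ :=
        hcont_fh.integrable_of_hasCompactSupport (HasCompactSupport.of_compactSpace _)
      have hind : Integrable (W.indicator fun _ : X => -a / 8) μ :=
        (integrable_const _).indicator hWopen.measurableSet
      have hptwise : ∀ u, fC u * (h u) ^ 2 ≤ W.indicator (fun _ => -a / 8) u := by
        intro u
        by_cases huW : u ∈ W
        · rw [Set.indicator_of_mem huW]
          obtain ⟨huU, huh⟩ := huW
          have h1 : l (φ u) < -a / 2 := huU
          have h2 : (1 : ℝ) / 2 < h u := huh
          have h3 : h u ≤ 1 := (h01 u).2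
          show l (φ u) * (h u) ^ 2 ≤ -a / 8
          have ht2 : (1 : ℝ) / 4 ≤ (h u) ^ 2 := by nlinarith
          nlinarith [mul_nonneg (by linarith : (0:ℝ) ≤ -a / 2 - l (φ u))
            (by linarith : (0:ℝ) ≤ (h u) ^ 2 - 1 / 4),
            mul_nonneg (le_of_lt ha0) (by linarith : (0:ℝ) ≤ (h u) ^ 2 - 1 / 4)]
        · rw [Set.indicator_of_notMem huW]
          by_cases huU : u ∈ U
          · have h1 : l (φ u) < -a / 2 := huU
            have := sq_nonneg (h u)
            show l (φ u) * (h u) ^ 2 ≤ 0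
            nlinarith
          · have : h u = 0 := h0 huU
            show l (φ u) * (h u) ^ 2 ≤ 0
            simp [this]
      have hInt_neg : ∫ u, fC u * (h u) ^ 2 ∂μ < 0 := by
        calc ∫ u, fC u * (h u) ^ 2 ∂μ
            ≤ ∫ u, W.indicator (fun _ => -a / 8) u ∂μ :=
              integral_mono hint_fh hind hptwise
          _ = (-a / 8) * (μ W).toReal := by
              rw [integral_indicator_const _ hWopen.measurableSet]; simp [mul_comm, measureReal_def]
          _ < 0 := by
              apply mul_neg_of_neg_of_pos _ hμW; linarith
      -- the set of p with nonnegative integral is closed and contains A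
      have hintc : Continuous fun q : C(X, ℝ) => ∫ u, q u ∂μ := by
        apply LipschitzWith.continuous (K := (μ Set.univ).toNNReal)
        apply LipschitzWith.of_dist_le_mul
        intro q₁ q₂
        have hq : Integrable (fun u => q₁ u) μ :=
          q₁.continuous.integrable_of_hasCompactSupport (HasCompactSupport.of_compactSpace _)
        have hq' : Integrable (fun u => q₂ u) μ :=
          q₂.continuous.integrable_of_hasCompactSupport (HasCompactSupport.of_compactSpace _)
        rw [dist_eq_norm, ← integral_sub hq hq']
        have hb : ∀ u, ‖q₁ u - q₂ u‖ ≤ dist q₁ q₂ := by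
          intro u
          rw [dist_eq_norm]
          calc ‖q₁ u - q₂ u‖ = ‖(q₁ - q₂) u‖ := by simp
            _ ≤ ‖q₁ - q₂‖ := ContinuousMap.norm_coe_le_norm _ u
        calc ‖∫ u, (q₁ u - q₂ u) ∂μ‖
            ≤ dist q₁ q₂ * (μ Set.univ).toReal :=
              norm_integral_le_of_norm_le_const (Filter.Eventually.of_forall hb)
          _ = ((μ Set.univ).toNNReal : ℝ) * dist q₁ q₂ := by
              rw [mul_comm]; congr 1
      have hΦcont : Continuous fun p : C(X, ℝ) => ∫ u, fC u * (p u) ^ 2 ∂μ := by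
        have hmulc : Continuous fun p : C(X, ℝ) => fC * (p * p) :=
          continuous_const.mul (continuous_id.mul continuous_id)
        have := hintc.comp hmulc
        convert this using 2 with p
        apply integral_congr_ae
        filter_upwards with u
        simp [pow_two]
      have hSclosed : IsClosed {p : C(X, ℝ) | 0 ≤ ∫ u, fC u * (p u) ^ 2 ∂μ} :=
        isClosed_le continuous_const hΦcont
      have hAsub : (A : Set C(X, ℝ)) ⊆ {p : C(X, ℝ) | 0 ≤ ∫ u, fC u * (p u) ^ 2 ∂μ} := by
        rintro p hp
        obtain ⟨j, hj⟩ := hUmem.mp hp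
        exact hl j p hj
      have hhS : h ∈ {p : C(X, ℝ) | 0 ≤ ∫ u, fC u * (p u) ^ 2 ∂μ} := by
        have : h ∈ closure (A : Set C(X, ℝ)) := by rw [hdense]; trivial
        exact hSclosed.closure_subset_iff.mpr hAsub this
      exact absurd hhS (by simp only [Set.mem_setOf_eq, not_le]; exact hInt_neg)
    rintro c ⟨m, cf, xs, hcf, hxs, rfl⟩
    rw [map_sum]
    apply Finset.sum_nonneg
    intro i _
    rw [LinearMap.map_smul, smul_eq_mul]
    obtain ⟨x, hx⟩ := hxs i
    exact mul_nonneg (hcf i) (hx ▸ hpt x)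
  · intro hl j p hp
    apply integral_nonneg
    intro u
    exact mul_nonneg (hl _ (hrange u)) (sq_nonneg _)
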